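/- For a, b in (0,1], the set A = (1/2 - b/4, 1/2 + a/4] satisfies f(A) = A, where f = f_{a,b}. -/
import Mathlib


noncomputable def fab (a b x : ℝ) : ℝ :=
  if x ≤ 1/2 then x * (1 + a - a * x) else x * (1 - b + b * x)

theorem stmt6 (a b : ℝ) (ha : a ∈ Set.Ioc (0:ℝ) 1) (hb : b ∈ Set.Ioc (0:ℝ) 1) :
    fab a b '' Set.Ioc (1/2 - b/4) (1/2 + a/4) = Set.Ioc (1/2 - b/4) (1/2 + a/4) := by
  obtain ⟨ha0, ha1⟩ := ha
  obtain ⟨hb0, hb1⟩ := hb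
  apply Set.Subset.antisymm
  · rintro _ ⟨x, ⟨hx1, hx2⟩, rfl⟩
    unfold fab
    split_ifs with h
    · have h0x : (0:ℝ) < x := by linarith
      refine ⟨by nlinarith [mul_nonneg (mul_nonneg ha0.le h0x.le) (by linarith : (0:ℝ) ≤ 1 - x)], by nlinarith [sq_nonneg (x - 1/2)]⟩
    · push_neg at h
      refine ⟨by nlinarith [sq_nonneg (x - 1/2)], by nlinarith [mul_nonneg (mul_nonneg hb0.le (by linarith : (0:ℝ) ≤ x)) (by linarith : (0:ℝ) ≤ 1 - x)]⟩
  · rintro y ⟨hy1, hy2⟩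
    by_cases hcase : (1/2 - b/4) * (1 + a - a * (1/2 - b/4)) < y
    · have hsub := intermediate_value_Ioc (show (1/2 - b/4 : ℝ) ≤ 1/2 by linarith)
        (Continuous.continuousOn (by continuity : Continuous fun x : ℝ => x * (1 + a - a * x)))
      have hy : y ∈ Set.Ioc ((1/2 - b/4) * (1 + a - a * (1/2 - b/4)))
          ((1/2 : ℝ) * (1 + a - a * (1/2))) := ⟨hcase, by nlinarith⟩
      obtain ⟨x, ⟨hx1, hx2⟩, hxy⟩ := hsub hy
      refine ⟨x, ⟨hx1, by linarith⟩, ?_⟩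
      simp only [fab]
      rw [if_pos hx2]
      exact hxy
    · push_neg at hcase
      have hsub := intermediate_value_Ioc (show (1/2 : ℝ) ≤ 1/2 + a/4 by linarith)
        (Continuous.continuousOn (by continuity : Continuous fun x : ℝ => x * (1 - b + b * x)))
      have hy : y ∈ Set.Ioc ((1/2 : ℝ) * (1 - b + b * (1/2)))
          ((1/2 + a/4) * (1 - b + b * (1/2 + a/4))) :=
        ⟨by nlinarith, by nlinarith [mul_pos (mul_pos ha0 hb0) hb0, mul_pos (mul_pos ha0 ha0) hb0]⟩
      obtain ⟨x, ⟨hx1, hx2⟩, hxy⟩ := hsub hy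
      refine ⟨x, ⟨by linarith, hx2⟩, ?_⟩
      simp only [fab]
      rw [if_neg (by linarith)]
      exact hxy
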